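/- Let α ∈ (0,1), β = 1/8, u_p = 0.5(1-(1-α)^{1/p}) and let U_n ~ χ²(n-2). Suppose p = p(n) → ∞ with p(n) = O(n^{2-δ}) for some δ ∈ (0,2). Then p · P(U_n < n(1 - u_p^β)) → 0 as n → ∞. -/

import Mathlib

open MeasureTheory ProbabilityTheory Filter Real

/-- Standard normal CDF. -/
noncomputable def Phi : ℝ → ℝ := fun x => ProbabilityTheory.cdf (gaussianReal 0 1) x

/-- Standard normal quantile function. -/
noncomputable def PhiInv : ℝ → ℝ := fun q => sInf {x | q ≤ Phi x}


/-- Chi-square distribution with k degrees of freedom, as Gamma(k/2, rate 1/2). -/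
noncomputable def chiSquare (k : ℝ) : Measure ℝ := gammaMeasure (k/2) (1/2)

lemma gamma_chernoff (a r s t : ℝ) (ha : 0 < a) (hr : 0 < r) (hs : 0 < s) :
    ((gammaMeasure a r) {x | x < t}).toReal ≤ exp (s * t) * (r / (r + s)) ^ a := by
  have hrs : 0 < r + s := by linarith
  have hKnn : 0 ≤ exp (s * t) * (r / (r + s)) ^ a := by positivity
  set K : ENNReal := ENNReal.ofReal (exp (s * t) * (r / (r + s)) ^ a) with hK
  have hset : {x : ℝ | x < t} = Set.Iio t := rfl
  have hμ : (gammaMeasure a r) {x | x < t} = ∫⁻ x in Set.Iio t, gammaPDF a r x := by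
    rw [hset, gammaMeasure, withDensity_apply _ measurableSet_Iio]
  have hΓ : 0 < Real.Gamma a := Real.Gamma_pos_of_pos ha
  have hpt : ∀ x ∈ Set.Iio t, gammaPDF a r x ≤ K * gammaPDF a (r + s) x := by
    intro x hx
    rcases lt_or_ge x 0 with hx0 | hx0
    · rw [gammaPDF_of_neg hx0, gammaPDF_of_neg hx0]; simp
    · rw [gammaPDF_of_nonneg hx0, gammaPDF_of_nonneg hx0, hK,
        ← ENNReal.ofReal_mul hKnn]
      apply ENNReal.ofReal_le_ofReal
      have key : exp (s * t) * (r / (r + s)) ^ a *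
            ((r + s) ^ a / Real.Gamma a * x ^ (a - 1) * exp (-((r + s) * x)))
          = r ^ a / Real.Gamma a * x ^ (a - 1) * (exp (s * t) * exp (-((r + s) * x))) := by
        rw [Real.div_rpow hr.le hrs.le]
        have h0 : ((r + s) : ℝ) ^ a ≠ 0 := by positivity
        field_simp
      rw [key]
      have hexp : exp (-(r * x)) ≤ exp (s * t) * exp (-((r + s) * x)) := by
        rw [← Real.exp_add]
        apply Real.exp_le_exp.mpr
        have hxt : x ≤ t := le_of_lt hx
        nlinarith
      exact mul_le_mul_of_nonneg_left hexp (by positivity)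
  have hmeas : Measurable fun x => K * gammaPDF a (r + s) x :=
    ((measurable_gammaPDFReal a (r + s)).ennreal_ofReal).const_mul K
  have h1 : ∫⁻ x in Set.Iio t, gammaPDF a r x ≤ ∫⁻ x in Set.Iio t, K * gammaPDF a (r + s) x :=
    setLIntegral_mono hmeas hpt
  have h2 : ∫⁻ x in Set.Iio t, K * gammaPDF a (r + s) x ≤ ∫⁻ x, K * gammaPDF a (r + s) x :=
    setLIntegral_le_lintegral _ _
  have hm : Measurable (gammaPDF a (r + s)) := (measurable_gammaPDFReal a (r + s)).ennreal_ofReal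
  have h3 : ∫⁻ x, K * gammaPDF a (r + s) x = K :=  by
    rw [lintegral_const_mul K hm, lintegral_gammaPDF_eq_one ha hrs, mul_one]
  have hle : (gammaMeasure a r) {x | x < t} ≤ K := by
    rw [hμ]; exact le_trans h1 (le_trans h2 (le_of_eq h3))
  have hfin := ENNReal.toReal_mono (by simp [hK]) hle
  rwa [hK, ENNReal.toReal_ofReal hKnn] at hfin

set_option maxHeartbeats 2000000 in
theorem stmt7 (α δ C : ℝ) (hα0 : 0 < α) (hα1 : α < 1) (hδ0 : 0 < δ) (hδ2 : δ < 2) (hC : 0 < C)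
    (p : ℕ → ℕ) (hptop : Tendsto p atTop atTop)
    (hpC : ∀ n : ℕ, (p n : ℝ) ≤ C * (n : ℝ) ^ (2 - δ)) :
    Tendsto (fun n : ℕ =>
        (p n : ℝ) *
          ((chiSquare ((n : ℝ) - 2))
            {x | x < (n : ℝ) * (1 - (0.5 * (1 - (1 - α) ^ ((1 : ℝ) / (p n : ℝ)))) ^ (8⁻¹ : ℝ))}).toReal)
      atTop (nhds 0) := by
  have h1α : 0 < 1 - α := by linarith
  set L : ℝ := -Real.log (1 - α) with hLdef
  have hL : 0 < L := by
    have := Real.log_neg h1α (by linarith)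
    simp only [hLdef]; linarith
  set c1 : ℝ := L / (2 * (1 + L)) with hc1def
  have hc1 : 0 < c1 := by positivity
  set K2 : ℝ := (c1 / C) ^ ((4:ℝ)⁻¹) with hK2def
  have hK2 : 0 < K2 := Real.rpow_pos_of_pos (by positivity) _
  set b : ℝ := K2 / 8 with hbdef
  have hb : 0 < b := by positivity
  set g : ℕ → ℝ := fun n =>
    C * exp 1 * (((n:ℝ) ^ ((1:ℝ)/2)) ^ 4 * exp (-(b * (n:ℝ) ^ ((1:ℝ)/2)))) with hgdef
  -- tendsto of g
  have hgt : Tendsto g atTop (nhds 0) := by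
    have hy : Tendsto (fun n : ℕ => b * ((n:ℝ) ^ ((1:ℝ)/2))) atTop atTop := by
      apply Tendsto.const_mul_atTop hb
      exact (tendsto_rpow_atTop (by norm_num)).comp tendsto_natCast_atTop_atTop
    have hcomp := (tendsto_pow_mul_exp_neg_atTop_nhds_zero 4).comp hy
    have h0 := hcomp.const_mul (C * exp 1 / b ^ 4)
    rw [mul_zero] at h0
    apply h0.congr
    intro n
    have hb4 : (b:ℝ) ^ 4 ≠ 0 := by positivity
    simp only [Function.comp_apply, hgdef]
    field_simp
  refine squeeze_zero' (g := g) ?_ ?_ hgt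
  · filter_upwards with n
    positivity
  · filter_upwards [hptop.eventually_ge_atTop 1, eventually_ge_atTop 3] with n hp1 hn3
    have hP1 : (1:ℝ) ≤ (p n : ℝ) := by exact_mod_cast hp1
    have hP0 : (0:ℝ) < (p n : ℝ) := by linarith
    have hn3' : (3:ℝ) ≤ (n:ℝ) := by exact_mod_cast hn3
    have hn0 : (0:ℝ) < (n:ℝ) := by linarith
    have hn1 : (1:ℝ) ≤ (n:ℝ) := by linarith
    set P : ℝ := (p n : ℝ) with hPdef
    -- facts about u
    have hrp0 : 0 < (1 - α) ^ ((1:ℝ)/P) := Real.rpow_pos_of_pos h1α _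
    have hrp1 : (1 - α) ^ ((1:ℝ)/P) < 1 := Real.rpow_lt_one h1α.le (by linarith) (by positivity)
    set u : ℝ := 0.5 * (1 - (1 - α) ^ ((1:ℝ)/P)) with hudef
    have hu0 : 0 < u := by rw [hudef]; nlinarith
    have hu1 : u < 1 := by rw [hudef]; nlinarith
    -- lower bound on u
    have hexp1 : (1 - α) ^ ((1:ℝ)/P) ≤ (1 + L/P)⁻¹ := by
      rw [Real.rpow_def_of_pos h1α]
      have hlog : Real.log (1 - α) = -L := by rw [hLdef]; ring
      rw [hlog]
      have h2 : (1:ℝ) + L/P ≤ exp (L/P) := by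
        have := Real.add_one_le_exp (L/P); linarith
      have h3 : exp (-L * (1/P)) = (exp (L/P))⁻¹ := by
        rw [← Real.exp_neg]; ring_nf
      rw [h3]
      have hpos : (0:ℝ) < 1 + L/P := by positivity
      exact inv_anti₀ hpos h2
    have hinv : ((1:ℝ) + L/P)⁻¹ = P/(P+L) := by field_simp
    have hu_low : c1 / P ≤ u := by
      have key : L/(2*(1+L)*P) ≤ L/(2*(P+L)) := by
        apply div_le_div_of_nonneg_left hL.le (by positivity)
        nlinarith
      have e1 : c1 / P = L/(2*(1+L)*P) := by rw [hc1def, div_div]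
      have e2 : L/(2*(P+L)) = 0.5 * (1 - P/(P+L)) := by
        have : P + L ≠ 0 := by positivity
        field_simp
        ring
      rw [e1]
      calc L/(2*(1+L)*P) ≤ L/(2*(P+L)) := key
        _ = 0.5 * (1 - P/(P+L)) := e2
        _ ≤ u := by rw [hudef]; rw [hinv] at hexp1; linarith
    -- ε facts
    set ε : ℝ := u ^ (8⁻¹ : ℝ) with hεdef
    have hε0 : 0 < ε := Real.rpow_pos_of_pos hu0 _
    have hε1 : ε < 1 := Real.rpow_lt_one hu0.le hu1 (by norm_num)
    have hε2 : ε ^ 2 = u ^ ((4:ℝ)⁻¹) := by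
      rw [hεdef, ← Real.rpow_natCast (u ^ (8⁻¹:ℝ)) 2, ← Real.rpow_mul hu0.le]
      norm_num
    -- lower bound on n * ε^2
    have hPle : P ≤ C * (n:ℝ) ^ ((2:ℝ) - δ) := hpC n
    have hnd0 : (0:ℝ) < (n:ℝ) ^ ((2:ℝ) - δ) := Real.rpow_pos_of_pos hn0 _
    have hu_low2 : c1 / (C * (n:ℝ) ^ ((2:ℝ) - δ)) ≤ u := by
      calc c1 / (C * (n:ℝ) ^ ((2:ℝ) - δ)) ≤ c1 / P :=
            div_le_div_of_nonneg_left hc1.le hP0 hPle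
        _ ≤ u := hu_low
    have hε2_low : K2 * ((n:ℝ) ^ (((2:ℝ) - δ) * (4:ℝ)⁻¹))⁻¹ ≤ ε ^ 2 := by
      rw [hε2]
      have h4 : (c1 / (C * (n:ℝ) ^ ((2:ℝ) - δ))) ^ ((4:ℝ)⁻¹) ≤ u ^ ((4:ℝ)⁻¹) :=
        Real.rpow_le_rpow (by positivity) hu_low2 (by norm_num)
      have h5 : (c1 / (C * (n:ℝ) ^ ((2:ℝ) - δ))) ^ ((4:ℝ)⁻¹)
          = K2 * ((n:ℝ) ^ (((2:ℝ) - δ) * (4:ℝ)⁻¹))⁻¹ := by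
        rw [hK2def]
        rw [show c1 / (C * (n:ℝ) ^ ((2:ℝ) - δ)) = (c1/C) * ((n:ℝ) ^ ((2:ℝ) - δ))⁻¹ by
          field_simp]
        rw [Real.mul_rpow (by positivity) (by positivity),
          Real.inv_rpow hnd0.le, ← Real.rpow_mul hn0.le]
      rw [← h5]; exact h4
    -- lower bound n * ε^2 ≥ K2 * n^(1/2)
    have hstep : K2 * (n:ℝ) ^ ((1:ℝ)/2) ≤ (n:ℝ) * ε ^ 2 := by
      have e1 : (n:ℝ) * (K2 * ((n:ℝ) ^ (((2:ℝ)-δ)*(4:ℝ)⁻¹))⁻¹)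
          = K2 * (n:ℝ) ^ ((1:ℝ) - ((2:ℝ)-δ)*(4:ℝ)⁻¹) := by
        rw [Real.rpow_sub hn0, Real.rpow_one, div_eq_mul_inv]
        ring
      have e2 : (n:ℝ) ^ ((1:ℝ)/2) ≤ (n:ℝ) ^ ((1:ℝ) - ((2:ℝ)-δ)*(4:ℝ)⁻¹) :=
        Real.rpow_le_rpow_of_exponent_le hn1 (by linarith)
      calc K2 * (n:ℝ) ^ ((1:ℝ)/2) ≤ K2 * (n:ℝ) ^ ((1:ℝ) - ((2:ℝ)-δ)*(4:ℝ)⁻¹) :=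
            mul_le_mul_of_nonneg_left e2 hK2.le
        _ = (n:ℝ) * (K2 * ((n:ℝ) ^ (((2:ℝ)-δ)*(4:ℝ)⁻¹))⁻¹) := e1.symm
        _ ≤ (n:ℝ) * ε ^ 2 := mul_le_mul_of_nonneg_left hε2_low hn0.le
    -- Chernoff bound
    have hchern := gamma_chernoff (((n:ℝ)-2)/2) (1/2) (ε/4) ((n:ℝ)*(1-ε))
      (by linarith) (by norm_num) (by positivity)
    have h1e : (0:ℝ) < 1 + ε/2 := by linarith
    have hbase : ((1:ℝ)/2)/(1/2 + ε/4) = (1 + ε/2)⁻¹ := by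
      have hne1 : ((1:ℝ)/2 + ε/4) ≠ 0 := by positivity
      have hne2 : ((1:ℝ) + ε/2) ≠ 0 := by positivity
      field_simp
      ring
    have hbpow : ((1 + ε/2 : ℝ)⁻¹) ^ (((n:ℝ)-2)/2)
        = exp (-((((n:ℝ)-2)/2) * Real.log (1 + ε/2))) := by
      rw [Real.inv_rpow h1e.le, Real.rpow_def_of_pos h1e, ← Real.exp_neg]
      congr 1
      ring
    have hlog : ε/2 - (ε/2)^2 ≤ Real.log (1 + ε/2) := by
      have hi := Real.log_le_sub_one_of_pos (show (0:ℝ) < (1+ε/2)⁻¹ by positivity)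
      rw [Real.log_inv] at hi
      have hinv2 : (1+ε/2) * (1+ε/2)⁻¹ = 1 := mul_inv_cancel₀ (ne_of_gt h1e)
      nlinarith [mul_pos hε0 (mul_pos hε0 hε0)]
    have hexpb : (ε/4)*((n:ℝ)*(1-ε)) - (((n:ℝ)-2)/2) * Real.log (1 + ε/2)
        ≤ 1 - (n:ℝ)*ε^2/8 := by
      have ha' : (0:ℝ) ≤ ((n:ℝ)-2)/2 := by linarith
      have hml := mul_le_mul_of_nonneg_left hlog ha'
      nlinarith [hml, hε0, hε1, hn3']
    set y : ℝ := (n:ℝ) ^ ((1:ℝ)/2) with hydef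
    have hy0 : 0 ≤ y := Real.rpow_nonneg hn0.le _
    have htR : ((chiSquare ((n:ℝ)-2)) {x | x < (n:ℝ)*(1-ε)}).toReal
        ≤ exp 1 * exp (-(b * y)) := by
      rw [show chiSquare ((n:ℝ)-2) = gammaMeasure (((n:ℝ)-2)/2) (1/2) from rfl]
      refine le_trans hchern ?_
      rw [hbase, hbpow, ← Real.exp_add]
      rw [← Real.exp_add]
      apply Real.exp_le_exp.mpr
      have hb0 : b * y ≤ (n:ℝ) * ε^2 / 8 := by
        rw [hbdef]; linarith
      calc (ε/4) * ((n:ℝ)*(1-ε)) + -((((n:ℝ)-2)/2) * Real.log (1 + ε/2))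
          ≤ 1 - (n:ℝ)*ε^2/8 := by linarith [hexpb]
        _ ≤ 1 + -(b * y) := by linarith
    have hy4 : y ^ 4 = (n:ℝ) ^ (2:ℝ) := by
      rw [hydef, ← Real.rpow_natCast ((n:ℝ) ^ ((1:ℝ)/2)) 4, ← Real.rpow_mul hn0.le]
      norm_num
    have hfin : P * ((chiSquare ((n:ℝ)-2)) {x | x < (n:ℝ)*(1-ε)}).toReal ≤ g n := by
      have hBnn : 0 ≤ exp 1 * exp (-(b * y)) := by positivity
      have hnd2 : (n:ℝ) ^ ((2:ℝ) - δ) ≤ (n:ℝ) ^ (2:ℝ) :=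
        Real.rpow_le_rpow_of_exponent_le hn1 (by linarith)
      calc P * ((chiSquare ((n:ℝ)-2)) {x | x < (n:ℝ)*(1-ε)}).toReal
          ≤ P * (exp 1 * exp (-(b * y))) := mul_le_mul_of_nonneg_left htR hP0.le
        _ ≤ (C * (n:ℝ) ^ ((2:ℝ) - δ)) * (exp 1 * exp (-(b * y))) :=
            mul_le_mul_of_nonneg_right hPle hBnn
        _ ≤ (C * (n:ℝ) ^ (2:ℝ)) * (exp 1 * exp (-(b * y))) := by
            apply mul_le_mul_of_nonneg_right _ hBnn
            exact mul_le_mul_of_nonneg_left hnd2 hC.le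
        _ = g n := by rw [hgdef]; simp only [← hydef]; rw [← hy4]; ring
    exact hfin
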